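/- Consider the regularized system ẋ^λ(t) = g_t^λ(x^λ(t)) with g_t^λ(x) = f(t,x) − (1/λ)(x − P_{S(t)}(x)), where f satisfies |f(t,x₁) − f(t,x₂)| ≤ L_f |x₁ − x₂| and |f(t,x)| ≤ L_f(1 + |x|), and S(t) are nonempty closed convex sets with d_H(S(t),S(s)) ≤ L_s|t−s|. Suppose |Y_λ(x^λ(t))| ≤ M and |Y_ν(x^ν(t))| ≤ M for all t ∈ [0,T], where Y_λ(x) = (1/λ)(x − P_{S(t)}(x)). If x^λ(0) = x^ν(0), then for all t ∈ [0,T]: |x^λ(t) − x^ν(t)|² ≤ M² (λ + ν) (e^{2 L_f t} − 1)/(2 L_f). -/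

import Mathlib

open MeasureTheory

open scoped RealInnerProductSpace

/-- Variational inequality for a nearest-point projection onto a convex set. -/
lemma proj_inner_le_zero {E : Type*} [NormedAddCommGroup E] [InnerProductSpace ℝ E]
    {K : Set E} (hK : Convex ℝ K) {x p : E} (hp : p ∈ K)
    (hmin : ∀ y ∈ K, ‖x - p‖ ≤ ‖x - y‖) {w : E} (hw : w ∈ K) :
    ⟪x - p, w - p⟫ ≤ 0 := by
  have hne : Nonempty K := ⟨⟨p, hp⟩⟩
  have heq : ‖x - p‖ = ⨅ w : K, ‖x - w‖ := by
    apply le_antisymm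
    · exact le_ciInf fun w => hmin w w.2
    · have hbdd : BddBelow (Set.range fun w : K => ‖x - w‖) := by
        refine ⟨0, ?_⟩
        rintro _ ⟨w, rfl⟩
        exact norm_nonneg _
      exact ciInf_le hbdd ⟨p, hp⟩
  exact (norm_eq_iInf_iff_real_inner_le_zero hK hp).1 heq w hw

/-- Quadratic Yosida monotonicity-type bound. -/
lemma quad_bound {E : Type*} [NormedAddCommGroup E] [InnerProductSpace ℝ E]
    (lam nu M : ℝ) (hlam : 0 < lam) (hnu : 0 < nu) (a b p : E)
    (hMa : ‖a‖ ≤ M) (hMb : ‖b‖ ≤ M) (hp : 0 ≤ ⟪p, a - b⟫) :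
    -⟪lam • a - nu • b + p, a - b⟫ ≤ M ^ 2 * (lam + nu) / 2 := by
  have hq : ⟪lam • a - nu • b, a - b⟫
      = lam * ⟪a, a⟫ - lam * ⟪a, b⟫ - nu * ⟪b, a⟫ + nu * ⟪b, b⟫ := by
    rw [inner_sub_left, inner_sub_right, inner_sub_right, real_inner_smul_left,
      real_inner_smul_left, real_inner_smul_left, real_inner_smul_left]
    ring
  rw [inner_add_left, hq]
  have haa : ⟪a, a⟫ = ‖a‖ ^ 2 := real_inner_self_eq_norm_sq a
  have hbb : ⟪b, b⟫ = ‖b‖ ^ 2 := real_inner_self_eq_norm_sq b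
  have hba : ⟪b, a⟫ = ⟪a, b⟫ := (real_inner_comm b a).symm
  have hab : ⟪a, b⟫ ≤ ‖a‖ * ‖b‖ := real_inner_le_norm a b
  rw [haa, hbb, hba]
  have ha2 : ‖a‖ ^ 2 ≤ M ^ 2 := pow_le_pow_left₀ (norm_nonneg a) hMa 2
  have hb2 : ‖b‖ ^ 2 ≤ M ^ 2 := pow_le_pow_left₀ (norm_nonneg b) hMb 2
  have hc : (lam + nu) * ⟪a, b⟫ ≤ (lam + nu) * ((‖a‖ ^ 2 + ‖b‖ ^ 2) / 2) := by
    apply mul_le_mul_of_nonneg_left _ (by positivity)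
    nlinarith [sq_nonneg (‖a‖ - ‖b‖), norm_nonneg a, norm_nonneg b]
  have k1 : lam * ‖b‖ ^ 2 ≤ lam * M ^ 2 := mul_le_mul_of_nonneg_left hb2 hlam.le
  have k2 : nu * ‖a‖ ^ 2 ≤ nu * M ^ 2 := mul_le_mul_of_nonneg_left ha2 hnu.le
  have k3 : (0:ℝ) ≤ lam * ‖a‖ ^ 2 := by positivity
  have k4 : (0:ℝ) ≤ nu * ‖b‖ ^ 2 := by positivity
  linarith

/-- quantitative comparison of two Moreau–Yosida regularized trajectories
with parameters `λ` and `ν` and the same initial condition. -/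
theorem regularized_trajectories_dist {n : ℕ}
    (T L_f L_s : ℝ) (hT : 0 < T) (hLf : 0 < L_f) (hLs : 0 ≤ L_s)
    (f : ℝ → EuclideanSpace ℝ (Fin n) → EuclideanSpace ℝ (Fin n))
    (hf_lip : ∀ t x₁ x₂, ‖f t x₁ - f t x₂‖ ≤ L_f * ‖x₁ - x₂‖)
    (hf_growth : ∀ t x, ‖f t x‖ ≤ L_f * (1 + ‖x‖))
    (S : ℝ → Set (EuclideanSpace ℝ (Fin n)))
    (hS : ∀ t, (S t).Nonempty ∧ IsClosed (S t) ∧ Convex ℝ (S t))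
    (hH : ∀ t s, EMetric.hausdorffEdist (S t) (S s) ≤ ENNReal.ofReal (L_s * |t - s|))
    (P : ℝ → EuclideanSpace ℝ (Fin n) → EuclideanSpace ℝ (Fin n))
    (hP : ∀ t x, P t x ∈ S t ∧ ∀ y ∈ S t, ‖x - P t x‖ ≤ ‖x - y‖)
    (lam nu M : ℝ) (hlam : 0 < lam) (hnu : 0 < nu) (hM : 0 ≤ M)
    (xlam xnu : ℝ → EuclideanSpace ℝ (Fin n))
    (hlam_ode : ∀ t ∈ Set.Icc 0 T, HasDerivAt xlam
      (f t (xlam t) - (1 / lam) • (xlam t - P t (xlam t))) t)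
    (hnu_ode : ∀ t ∈ Set.Icc 0 T, HasDerivAt xnu
      (f t (xnu t) - (1 / nu) • (xnu t - P t (xnu t))) t)
    (hYlam : ∀ t ∈ Set.Icc 0 T, ‖(1 / lam) • (xlam t - P t (xlam t))‖ ≤ M)
    (hYnu : ∀ t ∈ Set.Icc 0 T, ‖(1 / nu) • (xnu t - P t (xnu t))‖ ≤ M)
    (h0 : xlam 0 = xnu 0) :
    ∀ t ∈ Set.Icc 0 T,
      ‖xlam t - xnu t‖ ^ 2 ≤ M ^ 2 * (lam + nu) * (Real.exp (2 * L_f * t) - 1) / (2 * L_f) := by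
  set D : ℝ → EuclideanSpace ℝ (Fin n) := fun s => xlam s - xnu s with hD
  set D' : ℝ → EuclideanSpace ℝ (Fin n) := fun s =>
    (f s (xlam s) - (1 / lam) • (xlam s - P s (xlam s)))
      - (f s (xnu s) - (1 / nu) • (xnu s - P s (xnu s))) with hD'
  set φ : ℝ → ℝ := fun s => ‖xlam s - xnu s‖ ^ 2 with hφ
  set φ' : ℝ → ℝ := fun s => 2 * ⟪D s, D' s⟫ with hφ'
  have hderiv : ∀ s ∈ Set.Icc (0:ℝ) T, HasDerivAt φ (φ' s) s := by
    intro s hs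
    have hDd : HasDerivAt D (D' s) s := (hlam_ode s hs).sub (hnu_ode s hs)
    have hdd := hDd.inner ℝ hDd
    have h2 : HasDerivAt (fun t => ⟪D t, D t⟫) (φ' s) s := by
      convert hdd using 1
      show 2 * ⟪D s, D' s⟫ = _
      rw [real_inner_comm (D' s) (D s)]; ring
      all_goals rfl
    have hφeq : φ = fun t => ⟪D t, D t⟫ := by
      funext t; simp only [hφ, hD, real_inner_self_eq_norm_sq]
    rw [hφeq]; exact h2
  have hcont : ContinuousOn φ (Set.Icc 0 T) :=
    fun s hs => ((hderiv s hs).continuousAt).continuousWithinAt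
  have bound : ∀ s ∈ Set.Ico (0:ℝ) T, φ' s ≤ (2 * L_f) * φ s + M ^ 2 * (lam + nu) := by
    intro s hs
    have hs' : s ∈ Set.Icc (0:ℝ) T := Set.mem_Icc_of_Ico hs
    obtain ⟨-, -, hconv⟩ := hS s
    have hMa : ‖(1 / lam) • (xlam s - P s (xlam s))‖ ≤ M := hYlam s hs'
    have hMb : ‖(1 / nu) • (xnu s - P s (xnu s))‖ ≤ M := hYnu s hs'
    have h1 : ⟪xlam s - P s (xlam s), P s (xnu s) - P s (xlam s)⟫ ≤ 0 :=
      proj_inner_le_zero hconv (hP s (xlam s)).1 (hP s (xlam s)).2 (hP s (xnu s)).1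
    have h2 : ⟪xnu s - P s (xnu s), P s (xlam s) - P s (xnu s)⟫ ≤ 0 :=
      proj_inner_le_zero hconv (hP s (xnu s)).1 (hP s (xnu s)).2 (hP s (xlam s)).1
    -- inner of the projection difference with a - b is nonneg
    have hp : 0 ≤ ⟪P s (xlam s) - P s (xnu s),
        (1 / lam) • (xlam s - P s (xlam s)) - (1 / nu) • (xnu s - P s (xnu s))⟫ := by
      rw [inner_sub_right, real_inner_smul_right, real_inner_smul_right]
      have e1 : ⟪P s (xlam s) - P s (xnu s), xlam s - P s (xlam s)⟫
          = -⟪xlam s - P s (xlam s), P s (xnu s) - P s (xlam s)⟫ := by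
        rw [real_inner_comm, ← inner_neg_right]
        congr 1; abel
      have e2 : ⟪P s (xlam s) - P s (xnu s), xnu s - P s (xnu s)⟫
          = ⟪xnu s - P s (xnu s), P s (xlam s) - P s (xnu s)⟫ := real_inner_comm _ _
      rw [e1, e2]
      have hl : (0:ℝ) ≤ 1 / lam := by positivity
      have hn : (0:ℝ) ≤ 1 / nu := by positivity
      nlinarith
    -- decomposition of the difference
    have hax : lam • ((1 / lam) • (xlam s - P s (xlam s))) = xlam s - P s (xlam s) := by
      rw [smul_smul, mul_one_div, div_self hlam.ne', one_smul]
    have hby : nu • ((1 / nu) • (xnu s - P s (xnu s))) = xnu s - P s (xnu s) := by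
      rw [smul_smul, mul_one_div, div_self hnu.ne', one_smul]
    have hdecomp : D s = lam • ((1 / lam) • (xlam s - P s (xlam s)))
        - nu • ((1 / nu) • (xnu s - P s (xnu s))) + (P s (xlam s) - P s (xnu s)) := by
      rw [hax, hby, hD]; abel
    have key : ⟪D s, D' s⟫ = ⟪D s, f s (xlam s) - f s (xnu s)⟫
        - ⟪lam • ((1 / lam) • (xlam s - P s (xlam s)))
            - nu • ((1 / nu) • (xnu s - P s (xnu s))) + (P s (xlam s) - P s (xnu s)),
          (1 / lam) • (xlam s - P s (xlam s)) - (1 / nu) • (xnu s - P s (xnu s))⟫ := by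
      rw [← hdecomp, ← inner_sub_right]
      congr 1
      simp only [hD']
      abel
    have hinner1 : ⟪D s, f s (xlam s) - f s (xnu s)⟫ ≤ L_f * ‖D s‖ ^ 2 := by
      calc ⟪D s, f s (xlam s) - f s (xnu s)⟫ ≤ ‖D s‖ * ‖f s (xlam s) - f s (xnu s)‖ :=
            real_inner_le_norm _ _
        _ ≤ ‖D s‖ * (L_f * ‖xlam s - xnu s‖) :=
            mul_le_mul_of_nonneg_left (hf_lip s (xlam s) (xnu s)) (norm_nonneg _)
        _ = L_f * ‖D s‖ ^ 2 := by rw [hD]; ring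
    have hinner2 := quad_bound lam nu M hlam hnu
      ((1 / lam) • (xlam s - P s (xlam s))) ((1 / nu) • (xnu s - P s (xnu s)))
      (P s (xlam s) - P s (xnu s)) hMa hMb hp
    rw [hax, hby] at hinner2
    have hφs : φ s = ‖D s‖ ^ 2 := by rw [hφ, hD]
    simp only [hφ']
    rw [key, hφs]
    rw [hax, hby]
    linarith
  have h00 : φ 0 ≤ 0 := by rw [hφ]; simp [h0]
  have hlim : ∀ s ∈ Set.Ico (0:ℝ) T, ∀ r, φ' s < r →
      ∃ᶠ z in nhdsWithin s (Set.Ioi s), (z - s)⁻¹ * (φ z - φ s) < r := by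
    intro s hs r hr
    exact ((hderiv s (Set.mem_Icc_of_Ico hs)).hasDerivWithinAt).liminf_right_slope_le hr
  have hgron := le_gronwallBound_of_liminf_deriv_right_le hcont hlim h00 bound
  intro t ht
  have h := hgron t ht
  rw [gronwallBound_of_K_ne_0 (by positivity : (2:ℝ) * L_f ≠ 0)] at h
  simp only [sub_zero, zero_mul, zero_add] at h
  calc ‖xlam t - xnu t‖ ^ 2 = φ t := rfl
    _ ≤ M ^ 2 * (lam + nu) / (2 * L_f) * (Real.exp (2 * L_f * t) - 1) := h
    _ = M ^ 2 * (lam + nu) * (Real.exp (2 * L_f * t) - 1) / (2 * L_f) := by ring
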